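/- arXiv:2010.01344 — 4 statements merged into one kernel-verified Lean document; each statement's English description precedes it below -/
import Mathlib

section
/- The polygon MBR code satisfies the data collection property: if C(n,2) code symbols of an MDS code with dimension B = k(n-1) - C(k,2) are placed on the edges of K_n, then the symbols stored on any k nodes (i.e., edges incident to any k vertices) suffice to determine the entire file, since they include at least B distinct code symbols of the MDS code. -/
open Finset

lemma choose_two_add (k : ℕ) : ∀ m : ℕ,
    (k + m).choose 2 = k.choose 2 + k * m + m.choose 2 := by
  intro m
  induction m with
  | zero => simp
  | succ m ih =>
    have h1 : (k + (m + 1)).choose 2 = (k + m).choose 2 + (k + m) := by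
      show (k + m + 1).choose 2 = _
      rw [Nat.choose_succ_succ, Nat.choose_one_right]
      exact Nat.add_comm _ _
    have h2 : (m + 1).choose 2 = m.choose 2 + m := by
      rw [Nat.choose_succ_succ, Nat.choose_one_right]
      exact Nat.add_comm _ _
    rw [h1, ih, h2]
    ring

lemma two_mul_choose_two (k : ℕ) : 2 * k.choose 2 = k * (k - 1) := by
  induction k with
  | zero => simp
  | succ k ih =>
    have h : (k + 1).choose 2 = k.choose 2 + k := by
      rw [Nat.choose_succ_succ, Nat.choose_one_right]
      exact Nat.add_comm _ _
    rw [h]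
    have : (k + 1) * (k + 1 - 1) = k * (k - 1) + 2 * k := by
      cases k with
      | zero => simp
      | succ k => simp only [Nat.add_sub_cancel]; ring
    omega

/-- Data collection for the polygon MBR code: the `C(n,2)` symbols of an MDS
code of dimension `B = k(n-1) - C(k,2)` are placed on the edges of `K_n`
(2-element subsets of vertices); since any `B` coordinates of the MDS code
determine the codeword, the symbols on the edges incident to any `k` vertices
determine the entire codeword. -/
theorem stmt_7 (n k : ℕ) (hkn : k ≤ n) (F : Type*) [Field F] [DecidableEq F]
    (B : ℕ) (hB : B = k * (n - 1) - Nat.choose k 2)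
    (C : Set ({e : Finset (Fin n) // e.card = 2} → F))
    -- MDS property: any B coordinates determine the codeword
    (hMDS : ∀ T : Finset {e : Finset (Fin n) // e.card = 2}, B ≤ T.card →
        ∀ c ∈ C, ∀ c' ∈ C, (∀ e ∈ T, c e = c' e) → c = c') :
    ∀ S : Finset (Fin n), S.card = k →
      ∀ c ∈ C, ∀ c' ∈ C,
        (∀ e : {e : Finset (Fin n) // e.card = 2},
            (∃ v ∈ S, v ∈ e.1) → c e = c' e) → c = c' := by
  classical
  intro S hS c hc c' hc' h
  set P : {e : Finset (Fin n) // e.card = 2} → Prop := fun e => ∃ v ∈ S, v ∈ e.1 with hP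
  set T : Finset {e : Finset (Fin n) // e.card = 2} := univ.filter P with hT
  -- count: the complement of T injects into 2-subsets of Sᶜ
  have hneg : (univ.filter (fun e => ¬ P e)).card ≤ (n - k).choose 2 := by
    have := Finset.card_le_card_of_injOn
      (s := univ.filter (fun e => ¬ P e))
      (t := (Finset.univ \ S).powersetCard 2)
      (fun e => e.1)
      (by
        intro e he
        rw [Finset.mem_coe, Finset.mem_filter] at he
        rw [Finset.mem_coe, Finset.mem_powersetCard]
        refine ⟨?_, e.2⟩
        intro v hv
        rw [Finset.mem_sdiff]
        refine ⟨Finset.mem_univ v, fun hvS => he.2 ⟨v, hvS, hv⟩⟩)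
      (fun a _ b _ hab => Subtype.ext hab)
    calc (univ.filter (fun e => ¬ P e)).card
        ≤ ((Finset.univ \ S).powersetCard 2).card := this
      _ = (n - k).choose 2 := by
          rw [Finset.card_powersetCard, Finset.card_sdiff_of_subset (Finset.subset_univ S),
            Finset.card_univ, Fintype.card_fin, hS]
  have htot : T.card + (univ.filter (fun e => ¬ P e)).card = n.choose 2 := by
    rw [hT, Finset.card_filter_add_card_filter_not, Finset.card_univ,
      Fintype.card_finset_len, Fintype.card_fin]
  -- arithmetic
  have h1 : n.choose 2 = k.choose 2 + k * (n - k) + (n - k).choose 2 := by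
    have := choose_two_add k (n - k)
    rwa [Nat.add_sub_cancel' hkn] at this
  have h2 : 2 * k.choose 2 = k * (k - 1) := two_mul_choose_two k
  have h3 : k * (n - 1) = k * (k - 1) + k * (n - k) := by
    cases k with
    | zero => simp
    | succ j =>
      have hn : n - 1 = j + (n - (j + 1)) := by omega
      rw [hn, Nat.mul_add]
      simp
  have hBle : B ≤ T.card := by
    subst hB
    omega
  exact hMDS T hBle c hc c' hc' (fun e he => h e (Finset.mem_filter.mp he).2)
end

section
/- The minimum distance of an (n,k,r) locally recoverable code satisfies d_min ≤ n - k + 1 - (⌈k/r⌉ - 1). -/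
open Finset

open Module

namespace GHSYaux

variable {F : Type*} [Field F] {n : ℕ}

noncomputable def K (C : Submodule F (Fin n → F)) (A : Finset (Fin n)) :
    Submodule F (Fin n → F) :=
  C ⊓ ⨅ i ∈ A, LinearMap.ker (LinearMap.proj (R := F) (φ := fun _ : Fin n => F) i)

lemma mem_K {C : Submodule F (Fin n → F)} {A : Finset (Fin n)} {x : Fin n → F} :
    x ∈ K C A ↔ x ∈ C ∧ ∀ i ∈ A, x i = 0 := by
  simp [K, Submodule.mem_iInf, Submodule.mem_inf, LinearMap.mem_ker]

lemma K_mono {C : Submodule F (Fin n → F)} {A B : Finset (Fin n)} (h : A ⊆ B) :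
    K C B ≤ K C A := fun x hx => by
  rw [mem_K] at *
  exact ⟨hx.1, fun i hi => hx.2 i (h hi)⟩

/-- Cutting by one linear functional drops the dimension by at most one. -/
lemma finrank_le_finrank_inf_ker_add_one {V : Type*} [AddCommGroup V] [Module F V]
    [FiniteDimensional F V] (W : Submodule F V) (f : V →ₗ[F] F) :
    finrank F W ≤ finrank F ↥(W ⊓ LinearMap.ker f) + 1 := by
  have h1 := LinearMap.finrank_range_add_finrank_ker (f.comp W.subtype)
  have h2 : finrank F ↥(LinearMap.range (f.comp W.subtype)) ≤ 1 := by
    simpa using Submodule.finrank_le (LinearMap.range (f.comp W.subtype))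
  have h3 : LinearMap.ker (f.comp W.subtype) =
      Submodule.comap W.subtype (W ⊓ LinearMap.ker f) := by
    rw [LinearMap.ker_comp, Submodule.comap_inf, Submodule.comap_subtype_self, top_inf_eq]
  have h4 : finrank F ↥(LinearMap.ker (f.comp W.subtype)) =
      finrank F ↥(W ⊓ LinearMap.ker f) := by
    rw [h3]
    exact (Submodule.comapSubtypeEquivOfLe inf_le_left).finrank_eq
  omega

lemma K_insert (C : Submodule F (Fin n → F)) (A : Finset (Fin n)) (i : Fin n) :
    K C (insert i A) = K C A ⊓
      LinearMap.ker (LinearMap.proj (R := F) (φ := fun _ : Fin n => F) i) := by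
  ext x
  simp only [mem_K, Submodule.mem_inf, LinearMap.mem_ker, LinearMap.proj_apply,
    Finset.mem_insert]
  constructor
  · rintro ⟨h1, h2⟩
    exact ⟨⟨h1, fun j hj => h2 j (Or.inr hj)⟩, h2 i (Or.inl rfl)⟩
  · rintro ⟨⟨h1, h2⟩, h3⟩
    exact ⟨h1, fun j hj => hj.elim (fun h => h ▸ h3) (h2 j)⟩

lemma finrank_K_insert (C : Submodule F (Fin n → F)) (A : Finset (Fin n)) (i : Fin n) :
    finrank F (K C A) ≤ finrank F (K C (insert i A)) + 1 := by
  rw [K_insert]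
  exact finrank_le_finrank_inf_ker_add_one _ _

lemma finrank_K_union (C : Submodule F (Fin n → F)) (A : Finset (Fin n)) :
    ∀ S : Finset (Fin n), finrank F (K C A) ≤ finrank F (K C (A ∪ S)) + S.card := by
  classical
  intro S
  induction S using Finset.induction with
  | empty => rw [Finset.union_empty, Finset.card_empty, Nat.add_zero]
  | insert j S hx ih =>
    have h1 : A ∪ insert j S = insert j (A ∪ S) := by
      ext y; simp [or_assoc, or_left_comm]
    rw [h1, Finset.card_insert_of_notMem hx]
    have := finrank_K_insert C (A ∪ S) j
    omega


lemma grow (C : Submodule F (Fin n → F)) (r : ℕ) (hr : 0 < r)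
    (hloc : ∀ i : Fin n, ∃ S : Finset (Fin n), i ∉ S ∧ S.card ≤ r ∧
        ∃ a : Fin n → F, ∀ c ∈ C, c i = ∑ j ∈ S, a j * c j) :
    ∀ d (A : Finset (Fin n)), finrank F (K C A) = d → 1 ≤ d →
      ∃ B : Finset (Fin n), finrank F (K C B) = 1 ∧
        A.card + (d - 1) + (d - 1) / r ≤ B.card := by
  intro d
  induction d using Nat.strong_induction_on with
  | _ d ih =>
    intro A hA hd
    rcases eq_or_lt_of_le hd with h1 | h2
    · refine ⟨A, by omega, ?_⟩
      have : d - 1 = 0 := by omega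
      simp [this]
    -- d ≥ 2 : pick a nonzero codeword vanishing on A
    · have hne : K C A ≠ ⊥ := by
        intro hbot
        rw [hbot, finrank_bot] at hA
        omega
      obtain ⟨c, hc, hc0⟩ := (Submodule.ne_bot_iff _).mp hne
      obtain ⟨i, hi⟩ : ∃ i, c i ≠ 0 := by
        by_contra h
        push_neg at h
        exact hc0 (funext h)
      have hcA := mem_K.mp hc
      have hiA : i ∉ A := fun h => hi (hcA.2 i h)
      rcases le_or_gt d r with hdr | hrd
      · -- small case : add a single coordinate
        set A' := insert i A with hA'
        have hlt : K C A' < K C A := by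
          refine lt_of_le_of_ne (K_mono (Finset.subset_insert i A)) ?_
          intro heq
          have : c ∈ K C A' := heq ▸ hc
          exact hi ((mem_K.mp this).2 i (Finset.mem_insert_self i A))
        have hflt : finrank F (K C A') < d := hA ▸ Submodule.finrank_lt_finrank_of_lt hlt
        have hfge : d ≤ finrank F (K C A') + 1 := by
          have h := finrank_K_insert C A i
          rw [← hA'] at h
          omega
        set d' := finrank F (K C A') with hd'
        obtain ⟨B, hB1, hB2⟩ := ih d' hflt A' rfl (by omega)
        refine ⟨B, hB1, ?_⟩
        have hcard : A'.card = A.card + 1 := Finset.card_insert_of_notMem hiA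
        have h0 : (d - 1) / r = 0 := Nat.div_eq_of_lt (by omega)
        have hB3 : A'.card + (d' - 1) ≤ B.card := le_trans (Nat.le_add_right _ _) hB2
        rw [h0]
        omega
      · -- big case : add the repair set of i
        obtain ⟨S, hiS, hScard, a, ha⟩ := hloc i
        set A' := insert i (A ∪ S) with hA'def
        have hKeq : K C A' = K C (A ∪ S) := by
          refine le_antisymm (K_mono (Finset.subset_insert _ _)) ?_
          intro x hx
          rw [mem_K] at hx ⊢
          refine ⟨hx.1, fun j hj => ?_⟩
          rcases Finset.mem_insert.mp hj with h | h
          · subst h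
            rw [ha x hx.1]
            exact Finset.sum_eq_zero fun j hj =>
              by rw [hx.2 j (Finset.mem_union_right _ hj), mul_zero]
          · exact hx.2 j h
        have hm : d ≤ finrank F (K C A') + (S \ A).card := by
          have h := finrank_K_union C A (S \ A)
          rw [Finset.union_sdiff_self_eq_union] at h
          rw [hKeq]
          omega
        have hmr : (S \ A).card ≤ r := le_trans (Finset.card_le_card (Finset.sdiff_subset)) hScard
        have hlt : K C A' < K C A := by
          refine lt_of_le_of_ne (K_mono ?_) ?_
          · exact fun x hx => Finset.mem_insert_of_mem (Finset.mem_union_left _ hx)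
          · intro heq
            have : c ∈ K C A' := heq ▸ hc
            exact hi ((mem_K.mp this).2 i (Finset.mem_insert_self _ _))
        have hflt : finrank F (K C A') < d := hA ▸ Submodule.finrank_lt_finrank_of_lt hlt
        set d' := finrank F (K C A') with hd'
        have hd'1 : 1 ≤ d' := by omega
        obtain ⟨B, hB1, hB2⟩ := ih d' hflt A' rfl hd'1
        refine ⟨B, hB1, ?_⟩
        have hiAS : i ∉ A ∪ S := by
          simp only [Finset.mem_union]
          tauto
        have hcard : A'.card = A.card + (S \ A).card + 1 := by
          rw [hA'def, Finset.card_insert_of_notMem hiAS]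
          have : A ∪ S = A ∪ (S \ A) := (Finset.union_sdiff_self_eq_union).symm
          rw [this, Finset.card_union_of_disjoint (Finset.disjoint_sdiff)]
        have hdiv : (d - 1) / r ≤ (d' - 1) / r + 1 := by
          have h1 : d - 1 ≤ (d' - 1) + r := by omega
          have h2 := Nat.div_le_div_right (c := r) h1
          rwa [Nat.add_div_right _ hr] at h2
        omega

end GHSYaux

/-- The Gopalan–Huang–Simitci–Yekhanin bound: an `(n,k,r)` locally recoverable
code (every code symbol is a linear combination of at most `r` others) has
minimum distance at most `n - k + 1 - (⌈k/r⌉ - 1)`, i.e. there is a nonzero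
codeword of Hamming weight at most that quantity. -/
theorem stmt_10 (F : Type*) [Field F] [DecidableEq F] (n k r : ℕ)
    (hk : 0 < k) (hr : 0 < r)
    (C : Submodule F (Fin n → F)) (hdim : Module.finrank F C = k)
    (hloc : ∀ i : Fin n, ∃ S : Finset (Fin n), i ∉ S ∧ S.card ≤ r ∧
        ∃ a : Fin n → F, ∀ c ∈ C, c i = ∑ j ∈ S, a j * c j) :
    ∃ c ∈ C, c ≠ 0 ∧
      (univ.filter fun i : Fin n => c i ≠ 0).card
        ≤ n - k + 1 - (⌈(k : ℚ) / r⌉₊ - 1) := by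
  classical
  have hK0 : finrank F (GHSYaux.K C ∅) = k := by
    have h : GHSYaux.K C ∅ = C := by
      simp [GHSYaux.K]
    rw [h, hdim]
  obtain ⟨B, hB1, hB2⟩ := GHSYaux.grow C r hr hloc k ∅ hK0 hk
  rw [Finset.card_empty] at hB2
  have hne : GHSYaux.K C B ≠ ⊥ := by
    intro h
    rw [h, finrank_bot] at hB1
    omega
  obtain ⟨c, hc, hc0⟩ := (Submodule.ne_bot_iff _).mp hne
  have hcB := GHSYaux.mem_K.mp hc
  refine ⟨c, hcB.1, hc0, ?_⟩
  have hsub : (univ.filter fun i : Fin n => c i ≠ 0) ⊆ Bᶜ := by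
    intro i hi
    rw [Finset.mem_compl]
    exact fun hiB => (Finset.mem_filter.mp hi).2 (hcB.2 i hiB)
  have hcard : (univ.filter fun i : Fin n => c i ≠ 0).card ≤ n - B.card := by
    have := Finset.card_le_card hsub
    rwa [Finset.card_compl, Fintype.card_fin] at this
  have hBn : B.card ≤ n := by
    simpa using Finset.card_le_univ B
  have hceil : ⌈(k : ℚ) / r⌉₊ = (k - 1) / r + 1 := by
    have hrQ : (0 : ℚ) < r := by exact_mod_cast hr
    rw [Nat.ceil_eq_iff (Nat.succ_ne_zero ((k - 1) / r))]
    constructor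
    · rw [Nat.succ_sub_one, lt_div_iff₀ hrQ]
      have h1 : (k - 1) / r * r ≤ k - 1 := Nat.div_mul_le_self _ _
      exact_mod_cast (by omega : (k - 1) / r * r < k)
    · rw [div_le_iff₀ hrQ]
      have h5 : k - 1 < ((k - 1) / r + 1) * r :=
        (Nat.div_lt_iff_lt_mul hr).mp (Nat.lt_succ_self _)
      exact_mod_cast (by omega : k ≤ ((k - 1) / r + 1) * r)
  rw [hceil]
  obtain ⟨t, ht⟩ : ∃ t, (k - 1) / r = t := ⟨_, rfl⟩
  rw [ht] at hB2 ⊢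
  omega
end

section
/- In the Tamo–Barg construction with (r+1) | (q-1) and n = q-1: if H is the group of (r+1)-th roots of unity in F_q^*, b ∈ F_q^*, β ∈ H, and f(x) = Σ_{i=0}^{ℓ} x^{(r+1)i} f_i(x) with deg f_i ≤ r-1, then f(bβ) = g(bβ) where g(x) = Σ_{i=0}^{ℓ} b^{(r+1)i} f_i(x) is a polynomial of degree ≤ r-1; consequently f(bβ) is determined by the r values {f(bθ) : θ ∈ H, θ ≠ β}. -/
open Finset Polynomial

/-- Tamo–Barg local recovery: with `(r+1) ∣ q-1`, `H` the group of `(r+1)`-th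
roots of unity, `b ≠ 0`, `β ∈ H`, and `f(x) = Σ_i x^{(r+1)i} f_i(x)` with
`deg f_i ≤ r-1`: the value `f(bβ)` agrees with the degree `≤ r-1` polynomial
`g(x) = Σ_i b^{(r+1)i} f_i(x)` at `bβ`, and consequently `f(bβ)` is determined
by the `r` values `{f(bθ) : θ ∈ H, θ ≠ β}` (any degree `≤ r-1` polynomial
matching `f` there matches at `bβ` too). -/
theorem stmt_11 (F : Type*) [Field F] [Fintype F] (r ℓ : ℕ) (hr : 1 ≤ r)
    (hdvd : (r + 1) ∣ (Fintype.card F - 1))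
    (b : F) (hb : b ≠ 0) (β : F) (hβ : β ^ (r + 1) = 1)
    (fs : Fin (ℓ + 1) → F[X]) (hdeg : ∀ i, (fs i).degree ≤ (r - 1 : ℕ))
    (f : F[X]) (hf : f = ∑ i : Fin (ℓ + 1), X ^ ((r + 1) * (i : ℕ)) * fs i) :
    (f.eval (b * β)
        = (∑ i : Fin (ℓ + 1), C (b ^ ((r + 1) * (i : ℕ))) * fs i).eval (b * β) ∧
      (∑ i : Fin (ℓ + 1), C (b ^ ((r + 1) * (i : ℕ))) * fs i).degree
        ≤ (r - 1 : ℕ)) ∧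
    ∀ g : F[X], g.degree ≤ (r - 1 : ℕ) →
      (∀ θ : F, θ ^ (r + 1) = 1 → θ ≠ β → f.eval (b * θ) = g.eval (b * θ)) →
      f.eval (b * β) = g.eval (b * β) := by
  classical
  set G : F[X] := ∑ i : Fin (ℓ + 1), C (b ^ ((r + 1) * (i : ℕ))) * fs i with hG
  -- key evaluation identity at any (r+1)-th root of unity
  have key : ∀ θ : F, θ ^ (r + 1) = 1 → f.eval (b * θ) = G.eval (b * θ) := by
    intro θ hθ
    subst hf
    rw [hG, eval_finset_sum, eval_finset_sum]
    refine Finset.sum_congr rfl fun i _ => ?_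
    rw [eval_mul, eval_mul, eval_pow, eval_X, eval_C]
    congr 1
    rw [pow_mul, pow_mul, mul_pow, hθ, mul_one]
  -- degree bound for G
  have hGdeg : G.degree ≤ (r - 1 : ℕ) := by
    refine (degree_sum_le _ _).trans (Finset.sup_le fun i _ => ?_)
    calc (C (b ^ ((r + 1) * (i : ℕ))) * fs i).degree
        ≤ (C (b ^ ((r + 1) * (i : ℕ)))).degree + (fs i).degree := degree_mul_le _ _
      _ ≤ 0 + ((r - 1 : ℕ) : WithBot ℕ) := add_le_add degree_C_le (hdeg i)
      _ = ((r - 1 : ℕ) : WithBot ℕ) := zero_add _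
  refine ⟨⟨key β hβ, hGdeg⟩, ?_⟩
  intro g hgdeg hmatch
  -- there are exactly r+1 roots of unity
  have hcardU : Fintype.card Fˣ = Fintype.card F - 1 := by simpa using Fintype.card_units (α := F)
  obtain ⟨u, hu⟩ := IsCyclic.exists_generator (α := Fˣ)
  have hou : orderOf u = Fintype.card F - 1 := by
    rw [← hcardU]; rw [← Nat.card_eq_fintype_card]; exact orderOf_eq_card_of_forall_mem_zpowers hu
  obtain ⟨k, hk⟩ := hdvd
  have hpos : 0 < Fintype.card F - 1 := by
    have := Fintype.card_pos (α := Fˣ)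
    omega
  have hprim : IsPrimitiveRoot (u ^ k) (r + 1) := by
    refine IsPrimitiveRoot.pow hpos ?_ (by rw [hk, mul_comm])
    rw [← hou]; exact IsPrimitiveRoot.orderOf u
  have hprimF : IsPrimitiveRoot ((u : F) ^ k) (r + 1) := by
    rw [← Units.val_pow_eq_pow_val]
    exact IsPrimitiveRoot.coe_units_iff.mpr hprim
  have hcard : #(nthRootsFinset (r + 1) (1 : F)) = r + 1 := hprimF.card_nthRootsFinset
  have hβmem : β ∈ nthRootsFinset (r + 1) (1 : F) :=
    (mem_nthRootsFinset (Nat.succ_pos r) (1 : F)).2 hβ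
  -- the evaluation points
  set S : Finset F := ((nthRootsFinset (r + 1) (1 : F)).erase β).image (fun θ => b * θ) with hS
  have hScard : #S = r := by
    rw [hS, Finset.card_image_of_injective _ (mul_right_injective₀ hb),
      Finset.card_erase_of_mem hβmem, hcard]
    omega
  have hzero : ∀ x ∈ S, (G - g).eval x = 0 := by
    intro x hx
    rw [hS, Finset.mem_image] at hx
    obtain ⟨θ, hθmem, rfl⟩ := hx
    have hθ1 : θ ^ (r + 1) = 1 :=
      (mem_nthRootsFinset (Nat.succ_pos r) (1 : F)).1 (Finset.mem_of_mem_erase hθmem)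
    have hθne : θ ≠ β := Finset.ne_of_mem_erase hθmem
    rw [eval_sub, ← key θ hθ1, hmatch θ hθ1 hθne, sub_self]
  have hdeglt : (G - g).natDegree < #S := by
    have h1 : (G - g).degree ≤ (r - 1 : ℕ) := (degree_sub_le _ _).trans (max_le hGdeg hgdeg)
    have h2 : (G - g).natDegree ≤ r - 1 := natDegree_le_iff_degree_le.mpr h1
    omega
  have hGg : G - g = 0 := eq_zero_of_natDegree_lt_card_of_eval_eq_zero' _ S hzero hdeglt
  have hGg' : G = g := by linear_combination (norm := ring_nf) hGg
  rw [key β hβ, hGg']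
end

section
/- The Tamo–Barg code with parameters n = q-1, k = ℓr + a (1 ≤ a ≤ r), locality r, has minimum distance at least n - k + 1 - (⌈k/r⌉ - 1); combined with the LRC Singleton-type bound, its minimum distance equals exactly n - k + 1 - (⌈k/r⌉ - 1). -/
open Finset Polynomial

lemma tb_ceil (r ℓ a : ℕ) (hr : 1 ≤ r) (ha1 : 1 ≤ a) (har : a ≤ r) :
    ⌈((ℓ * r + a : ℕ) : ℚ) / r⌉₊ = ℓ + 1 := by
  have hr0 : (0 : ℚ) < r := by exact_mod_cast hr
  rw [Nat.ceil_eq_iff (by omega)]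
  have h1 : (1:ℚ) ≤ a := by exact_mod_cast ha1
  have h2 : (a:ℚ) ≤ r := by exact_mod_cast har
  constructor
  · rw [lt_div_iff₀ hr0]
    push_cast
    linarith
  · rw [div_le_iff₀ hr0]
    push_cast
    linarith

lemma tb_pow {G : Type*} [CommGroup G] (w v : G) (i j s : ℕ) :
    (w^i * v^j)^s = (w^s)^i * (v^s)^j := by
  rw [mul_pow, ← pow_mul, ← pow_mul, ← pow_mul, ← pow_mul,
    Nat.mul_comm i s, Nat.mul_comm j s]

lemma tb_proddeg {F : Type*} [Field F] {ι : Type*} (s : Finset ι) (c : ι → F) :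
    (∏ i ∈ s, (X - C (c i))).natDegree = s.card := by
  rw [natDegree_prod _ _ fun i _ => X_sub_C_ne_zero _]
  simp

lemma tb_prod (F : Type*) [Field F] [DecidableEq F] (s : Finset F) (g : F[X])
    (hm : g.Monic) (hdeg : g.natDegree = s.card) (hroot : ∀ x ∈ s, g.IsRoot x) :
    g = ∏ x ∈ s, (X - C x) := by
  have hne : g ≠ 0 := hm.ne_zero
  have hle : s.val ≤ g.roots := by
    refine Multiset.le_iff_count.2 fun x => ?_
    by_cases hx : x ∈ s
    · rw [count_roots, Multiset.count_eq_one_of_mem s.nodup hx]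
      exact (rootMultiplicity_pos hne).2 (hroot x hx)
    · rw [Multiset.count_eq_zero_of_notMem hx]
      exact Nat.zero_le _
  have hdvd : (∏ x ∈ s, (X - C x)) ∣ g := by
    rw [Finset.prod_eq_multiset_prod]
    exact (Multiset.prod_X_sub_C_dvd_iff_le_roots hne s.val).2 hle
  obtain ⟨t, ht⟩ := hdvd
  have hPm : (∏ x ∈ s, (X - C x)).Monic :=
    monic_prod_of_monic _ _ fun x _ => monic_X_sub_C x
  have htm : t.Monic := hPm.of_mul_monic_left (ht ▸ hm)
  have hdegP : (∏ x ∈ s, (X - C x)).natDegree = s.card := by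
    rw [natDegree_prod _ _ fun x _ => X_sub_C_ne_zero x]
    simp [natDegree_X_sub_C]
  have ht0 : t.natDegree = 0 := by
    have h2 := natDegree_mul hPm.ne_zero htm.ne_zero
    rw [← ht, hdeg, hdegP] at h2
    omega
  rw [ht, (htm.natDegree_eq_zero).1 ht0, mul_one]

lemma tb_prod_units (F : Type*) [Field F] [DecidableEq F] (s : Finset Fˣ) (g : F[X])
    (hm : g.Monic) (hdeg : g.natDegree = s.card) (hroot : ∀ u ∈ s, g.IsRoot (u : F)) :
    g = ∏ u ∈ s, (X - C (u : F)) := by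
  have hinj : ∀ a ∈ s, ∀ b ∈ s, (a : F) = (b : F) → a = b := fun a _ b _ h => Units.ext h
  rw [show (∏ u ∈ s, (X - C (u:F))) = ∏ x ∈ s.image (Units.val : Fˣ → F), (X - C x) from
    (Finset.prod_image (f := fun x => X - C x) hinj).symm]
  refine tb_prod F _ g hm ?_ ?_
  · rw [Finset.card_image_of_injOn fun a _ b _ h => Units.ext h, hdeg]
  · intro x hx
    obtain ⟨u, hu, rfl⟩ := Finset.mem_image.1 hx
    exact hroot u hu

/-- The Tamo–Barg code `{(f(u))_{u ∈ F_q^*} : f ∈ Q}` with `n = q-1`,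
`k = ℓr + a` (`1 ≤ a ≤ r`), `(r+1) ∣ q-1`, where `Q` consists of polynomials
`f = Σ_{i≤ℓ} x^{(r+1)i} f_i(x)` with `deg f_i ≤ r-1` for `i < ℓ` and
`deg f_ℓ ≤ a-1`, has minimum distance exactly `n - k + 1 - (⌈k/r⌉ - 1)`:
every nonzero codeword has at least that weight, and some nonzero codeword has
exactly that weight. -/
theorem stmt_12 (F : Type*) [Field F] [Fintype F] [DecidableEq F]
    (r ℓ a n k : ℕ) (hr : 1 ≤ r) (ha1 : 1 ≤ a) (har : a ≤ r)
    (hdvd : (r + 1) ∣ (Fintype.card F - 1))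
    (hn : n = Fintype.card F - 1) (hk : k = ℓ * r + a) :
    (∀ f : F[X], ∀ fs : Fin (ℓ + 1) → F[X],
        (∀ i : Fin (ℓ + 1), (i : ℕ) < ℓ → (fs i).degree ≤ (r - 1 : ℕ)) →
        (fs (Fin.last ℓ)).degree ≤ (a - 1 : ℕ) →
        f = ∑ i : Fin (ℓ + 1), X ^ ((r + 1) * (i : ℕ)) * fs i →
        f ≠ 0 →
        n - k + 1 - (⌈(k : ℚ) / r⌉₊ - 1)
          ≤ (univ.filter fun u : Fˣ => f.eval (u : F) ≠ 0).card) ∧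
    (∃ f : F[X], ∃ fs : Fin (ℓ + 1) → F[X],
        (∀ i : Fin (ℓ + 1), (i : ℕ) < ℓ → (fs i).degree ≤ (r - 1 : ℕ)) ∧
        (fs (Fin.last ℓ)).degree ≤ (a - 1 : ℕ) ∧
        f = ∑ i : Fin (ℓ + 1), X ^ ((r + 1) * (i : ℕ)) * fs i ∧
        f ≠ 0 ∧
        (univ.filter fun u : Fˣ => f.eval (u : F) ≠ 0).card
          = n - k + 1 - (⌈(k : ℚ) / r⌉₊ - 1)) := by
  have hq : 1 < Fintype.card F := Fintype.one_lt_card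
  have hcardU : Fintype.card Fˣ = n := by rw [hn, Fintype.card_units]
  have hn1 : 1 ≤ n := by omega
  have hnr : r + 1 ≤ n := Nat.le_of_dvd (by omega) (hn ▸ hdvd)
  have hceil : ⌈(k:ℚ)/r⌉₊ = ℓ + 1 := by rw [hk]; exact_mod_cast tb_ceil r ℓ a hr ha1 har
  have hkl : k + ℓ = ℓ*(r+1) + a := by rw [hk]; ring
  obtain ⟨m, hm0⟩ := hdvd
  have hm' : n = (r+1)*m := by rw [hn, hm0]
  have hm1 : 1 ≤ m := Nat.pos_of_ne_zero fun h => by rw [h, Nat.mul_zero] at hm'; omega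
  constructor
  · -- lower bound
    intro f fs hlow hlast hsum hne
    have hd1 : f.natDegree ≤ ℓ*(r+1) + (a-1) := by
      rw [hsum]
      apply natDegree_sum_le_of_forall_le
      intro i _
      refine natDegree_mul_le.trans ?_
      rw [natDegree_X_pow]
      by_cases hi : (i:ℕ) < ℓ
      · have hfs : (fs i).natDegree ≤ r - 1 := natDegree_le_iff_degree_le.2 (hlow i hi)
        calc (r+1)*(i:ℕ) + (fs i).natDegree
            ≤ (r+1)*(i:ℕ) + (r+1) := by omega
          _ = (r+1)*((i:ℕ)+1) := by ring
          _ ≤ (r+1)*ℓ := Nat.mul_le_mul_left _ (by omega)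
          _ = ℓ*(r+1) := Nat.mul_comm _ _
          _ ≤ ℓ*(r+1) + (a-1) := Nat.le_add_right _ _
      · have hi' : i = Fin.last ℓ := by
          apply Fin.ext
          have := i.isLt
          simp only [Fin.val_last]
          omega
        subst hi'
        have hfs : (fs (Fin.last ℓ)).natDegree ≤ a - 1 := natDegree_le_iff_degree_le.2 hlast
        simp only [Fin.val_last]
        calc (r+1)*ℓ + (fs (Fin.last ℓ)).natDegree
            ≤ (r+1)*ℓ + (a-1) := by omega
          _ = ℓ*(r+1) + (a-1) := by ring_nf
    have hZ : (univ.filter fun u : Fˣ => f.eval (u:F) = 0).card ≤ f.natDegree := by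
      calc (univ.filter fun u : Fˣ => f.eval (u:F) = 0).card
          ≤ f.roots.toFinset.card := by
            apply Finset.card_le_card_of_injOn (fun u : Fˣ => (u:F))
            · intro u hu
              simp only [mem_coe, mem_filter, mem_univ, true_and] at hu
              rw [mem_coe, Multiset.mem_toFinset, mem_roots']
              exact ⟨hne, hu⟩
            · intro u _ v _ h
              exact Units.ext h
        _ ≤ Multiset.card f.roots := f.roots.toFinset_card_le
        _ ≤ f.natDegree := f.card_roots'
    have hcards := Finset.card_filter_add_card_filter_not
      (s := (univ : Finset Fˣ)) (p := fun u : Fˣ => f.eval (u:F) = 0)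
    rw [Finset.card_univ, hcardU] at hcards
    have hcase0 : ℓ = 0 → k + 1 ≤ n := by intro h0; subst h0; omega
    rw [hceil]
    simp only [ne_eq]
    omega
  · -- existence
    have hIC : IsCyclic Fˣ := inferInstance
    obtain ⟨g, hg⟩ := hIC.exists_generator
    have hog : orderOf g = n := by
      rw [orderOf_eq_card_of_forall_mem_zpowers hg, Nat.card_eq_fintype_card, hcardU]
    by_cases hgen : ℓ + 1 ≤ m
    · -- generic case
      set z : Fˣ := g ^ m with hz
      have hoz : orderOf z = r + 1 := by
        rw [hz, orderOf_pow, hog, Nat.gcd_eq_right ⟨r+1, by rw [hm']; ring⟩, hm',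
          Nat.mul_div_cancel _ hm1]
      set h : Fˣ := g ^ (r+1) with hh
      have hoh : orderOf h = m := by
        rw [hh, orderOf_pow, hog, Nat.gcd_eq_right ⟨m, hm'⟩, hm',
          Nat.mul_div_cancel_left _ (by omega)]
      set S : ℕ → Finset Fˣ := fun i => (range (r+1)).image (fun j => g^i * z^j) with hS
      have hScard : ∀ i, (S i).card = r + 1 := by
        intro i
        rw [hS]
        rw [Finset.card_image_of_injOn, card_range]
        intro j hj j' hj' hjj
        have hzz : z^j = z^j' := by
          have := hjj
          simpa using mul_left_cancel this
        exact pow_injOn_Iio_orderOf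
          (by rw [Set.mem_Iio, hoz]; exact mem_range.1 hj)
          (by rw [Set.mem_Iio, hoz]; exact mem_range.1 hj') hzz
      have hz1 : z^(r+1) = 1 := by rw [← hoz]; exact pow_orderOf_eq_one z
      have hSpow : ∀ i, ∀ u ∈ S i, u^(r+1) = h^i := by
        intro i u hu
        obtain ⟨j, hj, rfl⟩ := mem_image.1 hu
        rw [tb_pow g z i j (r+1), hz1, one_pow, mul_one, hh]
      have hfac : ∀ i, (X^(r+1) - C ((h^i : Fˣ) : F)) = ∏ u ∈ S i, (X - C (u:F)) := by
        intro i
        apply tb_prod_units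
        · exact monic_X_pow_sub_C _ (by omega)
        · rw [natDegree_X_pow_sub_C, hScard]
        · intro u hu
          have h1 : ((u:F))^(r+1) = ((h^i : Fˣ) : F) := by
            rw [← Units.val_pow_eq_pow_val, hSpow i u hu]
          simp only [IsRoot, eval_sub, eval_pow, eval_X, eval_C, h1, sub_self]
      have hβinj : ∀ i ≤ ℓ, ∀ j ≤ ℓ, h^i = h^j → i = j := by
        intro i hi j hj hij
        refine pow_injOn_Iio_orderOf ?_ ?_ hij <;>
          · rw [Set.mem_Iio, hoh]; omega
      have hSdisj : ∀ i ≤ ℓ, ∀ j ≤ ℓ, i ≠ j → Disjoint (S i) (S j) := by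
        intro i hi j hj hij
        rw [Finset.disjoint_left]
        intro u hui huj
        exact hij (hβinj i hi j hj (by rw [← hSpow i u hui, hSpow j u huj]))
      obtain ⟨Γ, hΓsub, hΓcard⟩ := Finset.exists_subset_card_eq (s := S ℓ) (n := a-1)
        (by rw [hScard]; omega)
      set Tu : Finset Fˣ := Γ ∪ (range ℓ).biUnion S with hTu
      have hTdisj : Disjoint Γ ((range ℓ).biUnion S) := by
        rw [Finset.disjoint_biUnion_right]
        intro i hi
        exact Finset.disjoint_of_subset_left hΓsub
          (hSdisj ℓ le_rfl i (le_of_lt (mem_range.1 hi)) (by have := mem_range.1 hi; omega))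
      have hTcard : Tu.card = (a-1) + ℓ*(r+1) := by
        rw [hTu, Finset.card_union_of_disjoint hTdisj, hΓcard,
          Finset.card_biUnion (fun i hi j hj hij =>
            hSdisj i (le_of_lt (mem_range.1 hi)) j (le_of_lt (mem_range.1 hj)) hij)]
        simp [hScard, Finset.sum_const, card_range, mul_comm]
      set p : F[X] := ∏ u ∈ Γ, (X - C (u:F)) with hp
      set Φ : F[X] := ∏ i ∈ range ℓ, (X - C ((h^i : Fˣ) : F)) with hΦ
      have hΦd : Φ.natDegree = ℓ := by
        rw [hΦ, tb_proddeg (range ℓ) (fun i => ((h^i : Fˣ) : F)), card_range]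
      have hpm : p.Monic := monic_prod_of_monic _ _ fun _ _ => monic_X_sub_C _
      have hpd : p.natDegree = a - 1 := by
        rw [hp, tb_proddeg Γ (fun u => (u : F)), hΓcard]
      set f : F[X] := Φ.comp (X^(r+1)) * p with hf
      have hfprod : f = ∏ u ∈ Tu, (X - C (u:F)) := by
        have h1 : Φ.comp (X^(r+1)) = ∏ i ∈ range ℓ, (X^(r+1) - C ((h^i : Fˣ) : F)) := by
          rw [hΦ, Polynomial.prod_comp]
          simp [sub_comp]
        rw [hf, h1, Finset.prod_congr rfl (fun i _ => hfac i),
          ← Finset.prod_biUnion (fun i hi j hj hij =>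
            hSdisj i (le_of_lt (mem_range.1 hi)) j (le_of_lt (mem_range.1 hj)) hij),
          hTu, Finset.prod_union hTdisj, mul_comm]
      have hpdeg : p.degree ≤ ((a-1 : ℕ) : WithBot ℕ) := by
        rw [← hpd]
        exact degree_le_natDegree
      refine ⟨f, fun i => C (Φ.coeff (i:ℕ)) * p, ?_, ?_, ?_, ?_, ?_⟩
      · intro i _
        calc (C (Φ.coeff (i:ℕ)) * p).degree ≤ (C (Φ.coeff (i:ℕ))).degree + p.degree :=
              degree_mul_le _ _
          _ ≤ 0 + ((a-1 : ℕ) : WithBot ℕ) := add_le_add degree_C_le hpdeg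
          _ = ((a-1 : ℕ) : WithBot ℕ) := zero_add _
          _ ≤ ((r-1 : ℕ) : WithBot ℕ) := by
              have har1 : a - 1 ≤ r - 1 := by omega
              exact_mod_cast har1
      · calc (C (Φ.coeff ((Fin.last ℓ : Fin (ℓ+1)) : ℕ)) * p).degree
            ≤ (C (Φ.coeff ((Fin.last ℓ : Fin (ℓ+1)) : ℕ))).degree + p.degree :=
              degree_mul_le _ _
          _ ≤ 0 + ((a-1 : ℕ) : WithBot ℕ) := add_le_add degree_C_le hpdeg
          _ = ((a-1 : ℕ) : WithBot ℕ) := zero_add _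
      · have h2 : Φ.comp (X^(r+1)) = ∑ i ∈ range (ℓ+1), C (Φ.coeff i) * (X^(r+1))^i := by
          have hlt : Φ.natDegree < ℓ + 1 := by rw [hΦd]; omega
          exact eval₂_eq_sum_range' C hlt _
        calc f = (∑ i ∈ range (ℓ+1), C (Φ.coeff i) * (X^(r+1))^i) * p := by rw [hf, ← h2]
          _ = ∑ i ∈ range (ℓ+1), X^((r+1)*i) * (C (Φ.coeff i) * p) := by
              rw [Finset.sum_mul]
              refine Finset.sum_congr rfl fun i _ => ?_
              rw [pow_mul]
              ring
          _ = ∑ i : Fin (ℓ+1), X^((r+1)*(i:ℕ)) * (C (Φ.coeff (i:ℕ)) * p) :=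
              (Fin.sum_univ_eq_sum_range _ _).symm
      · rw [hfprod]
        exact (monic_prod_of_monic _ _ fun u _ => monic_X_sub_C _).ne_zero
      · have hfilter : (univ.filter fun u : Fˣ => f.eval (u:F) ≠ 0) = Tuᶜ := by
          ext u
          simp only [mem_filter, mem_univ, true_and, Finset.mem_compl]
          rw [hfprod, eval_prod, Finset.prod_ne_zero_iff]
          constructor
          · intro hh hmem
            have := hh u hmem
            simp at this
          · intro hh v hv
            simp only [eval_sub, eval_X, eval_C, sub_ne_zero]
            intro he
            exact hh (Units.ext he ▸ hv)
        rw [hfilter, Finset.card_compl, hcardU, hTcard, hceil]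
        have hA : (r+1)*(ℓ+1) ≤ n := by rw [hm']; exact Nat.mul_le_mul_left _ hgen
        have hA2 : (r+1)*(ℓ+1) = ℓ*(r+1) + (r+1) := by ring
        omega
    · -- degenerate case
      push_neg at hgen
      have hml : m ≤ ℓ := by omega
      set Φ : F[X] := X^m - C 1 with hΦ
      have hΦd : Φ.natDegree = m := natDegree_X_pow_sub_C
      set f : F[X] := X^n - C 1 with hf
      have hcomp : Φ.comp (X^(r+1)) = f := by
        rw [hΦ, hf, sub_comp, pow_comp, X_comp, C_comp, ← pow_mul, ← hm']
      refine ⟨f, fun i => C (Φ.coeff (i:ℕ)), ?_, ?_, ?_, ?_, ?_⟩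
      · intro i _
        exact degree_C_le.trans (by exact_mod_cast Nat.zero_le _)
      · exact degree_C_le.trans (by exact_mod_cast Nat.zero_le _)
      · have h2 : Φ.comp (X^(r+1)) = ∑ i ∈ range (ℓ+1), C (Φ.coeff i) * (X^(r+1))^i := by
          have hlt : Φ.natDegree < ℓ + 1 := by rw [hΦd]; omega
          exact eval₂_eq_sum_range' C hlt _
        calc f = ∑ i ∈ range (ℓ+1), C (Φ.coeff i) * (X^(r+1))^i := by rw [← hcomp, h2]
          _ = ∑ i ∈ range (ℓ+1), X^((r+1)*i) * C (Φ.coeff i) := by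
              refine Finset.sum_congr rfl fun i _ => ?_
              rw [pow_mul]
              ring
          _ = ∑ i : Fin (ℓ+1), X^((r+1)*(i:ℕ)) * C (Φ.coeff (i:ℕ)) :=
              (Fin.sum_univ_eq_sum_range _ _).symm
      · rw [hf]
        exact X_pow_sub_C_ne_zero (by omega) 1
      · have hfilter : (univ.filter fun u : Fˣ => f.eval (u:F) ≠ 0) = ∅ := by
          rw [Finset.filter_eq_empty_iff]
          intro u _
          simp only [hf, eval_sub, eval_pow, eval_X, eval_C, ne_eq, not_not]
          have : u^n = 1 := by rw [← hcardU]; exact pow_card_eq_one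
          rw [← Units.val_pow_eq_pow_val, this, Units.val_one, sub_self]
        rw [hfilter, Finset.card_empty, hceil]
        have h1 : (r+1)*m ≤ (r+1)*ℓ := Nat.mul_le_mul_left _ hml
        have h2 : (r+1)*ℓ = ℓ*(r+1) := Nat.mul_comm _ _
        omega
end
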